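/- Let (X,d,m) be a metric measure space, p ∈ (1,∞), and let D be a pointwise local D-structure on (X,d,m). Then D is strongly local in the sense of Shanmugalingam: whenever u1, u2 ∈ S^p(X) satisfy u1 = u2 m-a.e. on some Borel set B ⊆ X, one has χ_B·g1 + χ_{X∖B}·g2 ∈ D[u2] for every g1 ∈ D[u1] and g2 ∈ D[u2]. -/

import Mathlib

open Filter Set
open scoped ENNReal NNReal Topology

noncomputable section

namespace AxSob

variable {X : Type*} [MetricSpace X] [MeasurableSpace X]

/-- The quantity `∫_B |u|^p dm`. -/
def lpIntOn (m : MeasureTheory.Measure X) (p : ℝ) (u : X → ℝ) (B : Set X) : ℝ≥0∞ :=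
  ∫⁻ x in B, ENNReal.ofReal |u x| ^ p ∂m

/-- `u` belongs to `L^p(m)`. -/
def LpMem (m : MeasureTheory.Measure X) (p : ℝ) (u : X → ℝ) : Prop :=
  Measurable u ∧ lpIntOn m p u Set.univ < ∞

/-- `u` belongs to `L^p_loc(m)`: it is Borel and `p`-integrable on every bounded Borel set. -/
def LpLocMem (m : MeasureTheory.Measure X) (p : ℝ) (u : X → ℝ) : Prop :=
  Measurable u ∧ ∀ B : Set X, MeasurableSet B → Bornology.IsBounded B → lpIntOn m p u B < ∞

/-- Convergence in `L^p(m)`. -/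
def LpTendsto (m : MeasureTheory.Measure X) (p : ℝ) (g : ℕ → X → ℝ) (g₀ : X → ℝ) : Prop :=
  Tendsto (fun n => lpIntOn m p (fun x => g n x - g₀ x) Set.univ) atTop (𝓝 0)

/-- Convergence in `L^p_loc(m)`. -/
def LpLocTendsto (m : MeasureTheory.Measure X) (p : ℝ) (u : ℕ → X → ℝ) (u₀ : X → ℝ) : Prop :=
  ∀ B : Set X, MeasurableSet B → Bornology.IsBounded B →
    Tendsto (fun n => lpIntOn m p (fun x => u n x - u₀ x) B) atTop (𝓝 0)

/-- `u` belongs to `L^∞(m)`. -/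
def LinfMem (m : MeasureTheory.Measure X) (u : X → ℝ) : Prop :=
  Measurable u ∧ ∃ C : ℝ, ∀ᵐ x ∂m, |u x| ≤ C

/-- A `D`-structure (à la Gol'dshtein–Troyanov) on a metric measure space `(X, d, m)`,
with exponent `p`.  To every function `u` (thought of as an element of `L^p_loc(m)`) it
associates the family `D u` of its pseudo-gradients: non-negative Borel functions,
considered up to `m`-a.e. equality, satisfying the axioms A1–A5. -/
structure DStructure (X : Type*) [MetricSpace X] [MeasurableSpace X]
    (m : MeasureTheory.Measure X) (p : ℝ) where
  D : (X → ℝ) → Set (X → ℝ)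
  measurable_of_mem : ∀ u g, g ∈ D u → Measurable g
  nonneg_of_mem : ∀ u g, g ∈ D u → 0 ≤ g
  /-- `D` is defined on `L^p_loc(m)`, i.e. on `m`-a.e. equivalence classes. -/
  congr_ae : ∀ u v : X → ℝ, u =ᵐ[m] v → D u = D v
  /-- pseudo-gradients are considered up to `m`-a.e. equality. -/
  mem_congr_ae : ∀ u g h : X → ℝ, g ∈ D u → g =ᵐ[m] h → Measurable h → 0 ≤ h → h ∈ D u
  /-- A1 (non triviality). -/
  axiomA1 : ∀ (u : X → ℝ) (K : ℝ≥0), LpLocMem m p u → 0 ≤ u → LipschitzWith K u →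
    {x | 0 < u x}.indicator (fun _ => (K : ℝ)) ∈ D u
  /-- A2 (upper linearity). -/
  axiomA2 : ∀ (u₁ u₂ g₁ g₂ g : X → ℝ) (α₁ α₂ : ℝ),
    LpLocMem m p u₁ → LpLocMem m p u₂ → g₁ ∈ D u₁ → g₂ ∈ D u₂ →
    Measurable g → 0 ≤ g → (∀ᵐ x ∂m, |α₁| * g₁ x + |α₂| * g₂ x ≤ g x) →
    g ∈ D (fun x => α₁ * u₁ x + α₂ * u₂ x)
  /-- A3 (Leibniz rule). -/
  axiomA3 : ∀ (u g φ : X → ℝ) (K : ℝ≥0) (M : ℝ),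
    LpLocMem m p u → g ∈ D u → LipschitzWith K φ → (∀ x, |φ x| ≤ M) →
    (fun x => g x * M + (K : ℝ) * |u x|) ∈ D (fun x => φ x * u x)
  /-- A4 (lattice property). -/
  axiomA4 : ∀ u₁ u₂ g₁ g₂ : X → ℝ,
    LpLocMem m p u₁ → LpLocMem m p u₂ → g₁ ∈ D u₁ → g₂ ∈ D u₂ →
    (fun x => max (g₁ x) (g₂ x)) ∈ D (fun x => max (u₁ x) (u₂ x)) ∧
    (fun x => max (g₁ x) (g₂ x)) ∈ D (fun x => min (u₁ x) (u₂ x))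
  /-- A5 (completeness). -/
  axiomA5 : ∀ (u g : ℕ → X → ℝ) (u₀ g₀ : X → ℝ),
    (∀ n, LpLocMem m p (u n)) → (∀ n, g n ∈ D (u n)) → (∀ n, LpMem m p (g n)) →
    LpLocMem m p u₀ → Measurable g₀ → 0 ≤ g₀ →
    LpLocTendsto m p u u₀ → LpTendsto m p g g₀ → g₀ ∈ D u₀

namespace DStructure

variable {m : MeasureTheory.Measure X} {p : ℝ}

/-- The `p`-Dirichlet energy `E_p(u|B) = inf { ∫_B g^p dm : g ∈ D[u] }`. -/
def energyOn (S : DStructure X m p) (u : X → ℝ) (B : Set X) : ℝ≥0∞ :=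
  ⨅ (g : X → ℝ) (_ : g ∈ S.D u), lpIntOn m p g B

/-- The `p`-Dirichlet energy `E_p(u) = E_p(u|X)`. -/
def energy (S : DStructure X m p) (u : X → ℝ) : ℝ≥0∞ := S.energyOn u Set.univ

/-- The Sobolev class `S^p(X) = { u ∈ L^p_loc(m) : E_p(u) < ∞ }`. -/
def SobolevClass (S : DStructure X m p) : Set (X → ℝ) :=
  {u | LpLocMem m p u ∧ S.energy u < ∞}

/-- The Sobolev space `W^{1,p}(X) = L^p(m) ∩ S^p(X)`. -/
def W1p (S : DStructure X m p) : Set (X → ℝ) :=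
  {u | LpMem m p u ∧ S.energy u < ∞}

/-- The Sobolev norm `‖u‖ = (‖u‖_{L^p}^p + E_p(u))^{1/p}`. -/
def wNorm (S : DStructure X m p) (u : X → ℝ) : ℝ≥0∞ :=
  (lpIntOn m p u Set.univ + S.energy u) ^ (1 / p)

/-- `g` is the minimal pseudo-gradient of `u`: `g ∈ D[u] ∩ L^p(m)` and
`∫ g^p dm = E_p(u)`. -/
def IsMinimalPG (S : DStructure X m p) (u g : X → ℝ) : Prop :=
  g ∈ S.D u ∧ LpMem m p g ∧ lpIntOn m p g Set.univ = S.energy u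

/-- Property L1: if `u ∈ S^p(X)` is `m`-a.e. constant on a Borel set `B`, then
`E_p(u|B) = 0`. -/
def L1prop (S : DStructure X m p) : Prop :=
  ∀ u ∈ S.SobolevClass, ∀ B : Set X, MeasurableSet B →
    (∃ c : ℝ, ∀ᵐ x ∂(m.restrict B), u x = c) → S.energyOn u B = 0

/-- Property L2: if `u ∈ S^p(X)` is `m`-a.e. constant on a Borel set `B`, then the
minimal pseudo-gradient vanishes `m`-a.e. on `B`. -/
def L2prop (S : DStructure X m p) : Prop :=
  ∀ u ∈ S.SobolevClass, ∀ B : Set X, MeasurableSet B →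
    (∃ c : ℝ, ∀ᵐ x ∂(m.restrict B), u x = c) →
    ∀ g, S.IsMinimalPG u g → ∀ᵐ x ∂(m.restrict B), g x = 0

/-- Property L3: if `u ∈ S^p(X)` and `g ∈ D[u]`, then `χ_{u>0}·g ∈ D[u⁺]`. -/
def L3prop (S : DStructure X m p) : Prop :=
  ∀ u ∈ S.SobolevClass, ∀ g ∈ S.D u,
    {x | 0 < u x}.indicator g ∈ S.D (fun x => max (u x) 0)

/-- Property L4: if `u ∈ S^p(X)` and `g₁, g₂ ∈ D[u]`, then `min{g₁,g₂} ∈ D[u]`. -/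
def L4prop (S : DStructure X m p) : Prop :=
  ∀ u ∈ S.SobolevClass, ∀ g₁ ∈ S.D u, ∀ g₂ ∈ S.D u,
    (fun x => min (g₁ x) (g₂ x)) ∈ S.D u

/-- Property L5: the minimal pseudo-gradient satisfies `Du ≤ g` `m`-a.e. for every
`g ∈ D[u]`. -/
def L5prop (S : DStructure X m p) : Prop :=
  ∀ u ∈ S.SobolevClass, ∀ g, S.IsMinimalPG u g →
    ∀ h ∈ S.D u, ∀ᵐ x ∂m, g x ≤ h x

/-- A pointwise local `D`-structure: it satisfies L1 and L5. -/
def PointwiseLocal (S : DStructure X m p) : Prop := S.L1prop ∧ S.L5prop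

/-- Strong locality in the sense of Shanmugalingam. -/
def ShanmugalingamLocal (S : DStructure X m p) : Prop :=
  ∀ u₁ ∈ S.SobolevClass, ∀ u₂ ∈ S.SobolevClass, ∀ B : Set X, MeasurableSet B →
    (∀ᵐ x ∂(m.restrict B), u₁ x = u₂ x) →
    ∀ g₁ ∈ S.D u₁, ∀ g₂ ∈ S.D u₂,
      (fun x => B.indicator g₁ x + Bᶜ.indicator g₂ x) ∈ S.D u₂

/-- Strong locality in the sense of Timoshin. -/
def TimoshinLocal (S : DStructure X m p) : Prop :=
  ∀ u₁ ∈ S.SobolevClass, ∀ u₂ ∈ S.SobolevClass,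
    ∀ g₁ ∈ S.D u₁, ∀ g₂ ∈ S.D u₂,
      (fun x => {y | u₁ y < u₂ y}.indicator g₁ x + {y | u₂ y < u₁ y}.indicator g₂ x +
        {y | u₁ y = u₂ y}.indicator (fun y => min (g₁ y) (g₂ y)) x)
        ∈ S.D (fun x => min (u₁ x) (u₂ x))

end DStructure

end AxSob


namespace AxSobAux


/-- 1-D uniform convexity estimate for `t ↦ t^p`. -/
lemma aux_one_dim {p : ℝ} (hp : 1 < p) :
    ∃ c : ℝ, 0 < c ∧ ∀ t : ℝ, 0 ≤ t → t ≤ 1 →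
      1 + c * t ^ 2 ≤ ((1 + t) ^ p + (1 - t) ^ p) / 2 := by
  have hp0 : (0:ℝ) < p := lt_trans one_pos hp
  have hp1 : (0:ℝ) < p - 1 := sub_pos.2 hp
  set κ : ℝ := (p - 1) * min ((2:ℝ) ^ (p - 2)) 1 with hκdef
  have hminpos : 0 < min ((2:ℝ) ^ (p - 2)) 1 :=
    lt_min (Real.rpow_pos_of_pos two_pos _) one_pos
  have hκpos : 0 < κ := mul_pos hp1 hminpos
  have hbase : ∀ x : ℝ, 0 < x → x ≤ 1 → min ((2:ℝ) ^ (p - 2)) 1 ≤ (1 + x) ^ (p - 2) := by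
    intro x hx0 hx1
    rcases le_or_gt p 2 with h2 | h2
    · refine le_trans (min_le_left _ _) ?_
      exact Real.rpow_le_rpow_of_nonpos (by linarith) (by linarith) (by linarith)
    · refine le_trans (min_le_right _ _) ?_
      exact Real.one_le_rpow (by linarith) (by linarith)
  have step1 : ∀ t : ℝ, 0 ≤ t → t ≤ 1 →
      κ * t ≤ (1 + t) ^ (p - 1) - (1 - t) ^ (p - 1) := by
    intro t ht0 ht1
    set ψ : ℝ → ℝ := fun t => (1 + t) ^ (p - 1) - (1 - t) ^ (p - 1) - κ * t with hψ
    have hder : ∀ x ∈ Set.Ioo (0:ℝ) 1, HasDerivAt ψ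
        (1 * (p - 1) * (1 + x) ^ (p - 1 - 1) - (-1) * (p - 1) * (1 - x) ^ (p - 1 - 1) - κ) x := by
      intro x hx
      have h1 : HasDerivAt (fun y : ℝ => (1 + y) ^ (p - 1))
          (1 * (p - 1) * (1 + x) ^ (p - 1 - 1)) x := by
        have hb : HasDerivAt (fun y : ℝ => 1 + y) 1 x := by
          simpa using (hasDerivAt_id x).const_add (1:ℝ)
        exact hb.rpow_const (Or.inl (by nlinarith [hx.1]))
      have h2 : HasDerivAt (fun y : ℝ => (1 - y) ^ (p - 1))
          ((-1) * (p - 1) * (1 - x) ^ (p - 1 - 1)) x := by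
        have hb : HasDerivAt (fun y : ℝ => 1 - y) (-1) x := by
          simpa using (hasDerivAt_id x).const_sub (1:ℝ)
        exact hb.rpow_const (Or.inl (by nlinarith [hx.2]))
      have h3 : HasDerivAt (fun y : ℝ => κ * y) κ x := by
        simpa using (hasDerivAt_id x).const_mul κ
      exact (h1.sub h2).sub h3
    have hcont : ContinuousOn ψ (Set.Icc 0 1) := by
      refine ContinuousOn.sub (ContinuousOn.sub ?_ ?_) ?_
      · exact (continuousOn_const.add continuousOn_id).rpow_const
          (fun x _ => Or.inr (by linarith))
      · exact (continuousOn_const.sub continuousOn_id).rpow_const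
          (fun x _ => Or.inr (by linarith))
      · exact continuousOn_const.mul continuousOn_id
    have hmono : MonotoneOn ψ (Set.Icc 0 1) := by
      refine monotoneOn_of_deriv_nonneg (convex_Icc 0 1) hcont ?_ ?_
      · intro x hx
        rw [interior_Icc] at hx
        exact ((hder x hx).differentiableAt).differentiableWithinAt
      · intro x hx
        rw [interior_Icc] at hx
        rw [(hder x hx).deriv]
        have hb1 := hbase x hx.1 (le_of_lt hx.2)
        have hb2 : (0:ℝ) ≤ (1 - x) ^ (p - 2) := Real.rpow_nonneg (by linarith [hx.2]) _
        rw [show p - 1 - 1 = p - 2 by ring]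
        have : κ ≤ (p - 1) * (1 + x) ^ (p - 2) := by
          rw [hκdef]
          exact mul_le_mul_of_nonneg_left hb1 (le_of_lt hp1)
        nlinarith
    have h0 : ψ 0 = 0 := by simp [hψ, Real.one_rpow]
    have := hmono (Set.mem_Icc.2 ⟨le_refl 0, zero_le_one⟩) (Set.mem_Icc.2 ⟨ht0, ht1⟩) ht0
    rw [h0] at this
    simp only [hψ] at this
    linarith
  refine ⟨p * κ / 4, by positivity, ?_⟩
  intro t ht0 ht1
  set c : ℝ := p * κ / 4 with hcdef
  set f : ℝ → ℝ := fun t => ((1 + t) ^ p + (1 - t) ^ p) / 2 - 1 - c * t ^ 2 with hf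
  have hder : ∀ x ∈ Set.Ioo (0:ℝ) 1, HasDerivAt f
      ((1 * p * (1 + x) ^ (p - 1) + (-1) * p * (1 - x) ^ (p - 1)) / 2 - c * (2 * x)) x := by
    intro x hx
    have h1 : HasDerivAt (fun y : ℝ => (1 + y) ^ p) (1 * p * (1 + x) ^ (p - 1)) x := by
      have hb : HasDerivAt (fun y : ℝ => 1 + y) 1 x := by
        simpa using (hasDerivAt_id x).const_add (1:ℝ)
      exact hb.rpow_const (Or.inl (by nlinarith [hx.1]))
    have h2 : HasDerivAt (fun y : ℝ => (1 - y) ^ p) ((-1) * p * (1 - x) ^ (p - 1)) x := by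
      have hb : HasDerivAt (fun y : ℝ => 1 - y) (-1) x := by
        simpa using (hasDerivAt_id x).const_sub (1:ℝ)
      exact hb.rpow_const (Or.inl (by nlinarith [hx.2]))
    have h3 : HasDerivAt (fun y : ℝ => c * y ^ 2) (c * (2 * x)) x := by
      have : HasDerivAt (fun y : ℝ => y ^ 2) (2 * x) x := by
        simpa using hasDerivAt_pow 2 x
      simpa using this.const_mul c
    exact (((h1.add h2).div_const 2).sub_const 1).sub h3
  have hcont : ContinuousOn f (Set.Icc 0 1) := by
    refine ContinuousOn.sub (ContinuousOn.sub (ContinuousOn.div_const ?_ 2) continuousOn_const) ?_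
    · exact ((continuousOn_const.add continuousOn_id).rpow_const
        (fun x _ => Or.inr (by linarith))).add
        ((continuousOn_const.sub continuousOn_id).rpow_const (fun x _ => Or.inr (by linarith)))
    · exact continuousOn_const.mul (continuousOn_id.pow 2)
  have hmono : MonotoneOn f (Set.Icc 0 1) := by
    refine monotoneOn_of_deriv_nonneg (convex_Icc 0 1) hcont ?_ ?_
    · intro x hx
      rw [interior_Icc] at hx
      exact ((hder x hx).differentiableAt).differentiableWithinAt
    · intro x hx
      rw [interior_Icc] at hx
      rw [(hder x hx).deriv]
      have hs := step1 x (le_of_lt hx.1) (le_of_lt hx.2)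
      have : c * (2 * x) ≤ (p / 2) * (κ * x) := by
        rw [hcdef]; ring_nf; nlinarith [hx.1, hκpos, hp0]
      nlinarith
  have h0 : f 0 = 0 := by simp [hf, Real.one_rpow]
  have := hmono (Set.mem_Icc.2 ⟨le_refl 0, zero_le_one⟩) (Set.mem_Icc.2 ⟨ht0, ht1⟩) ht0
  rw [h0] at this
  simp only [hf] at this
  linarith


/-- Two-variable uniform convexity gap for `t ↦ t^p` on nonnegative reals. -/
lemma aux_gap {p : ℝ} (hp : 1 < p) :
    ∃ c : ℝ, 0 < c ∧ ∀ a b : ℝ, 0 ≤ a → 0 ≤ b →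
      c * ((a - b) ^ 2 * (a + b) ^ (p - 2)) + ((a + b) / 2) ^ p ≤ (a ^ p + b ^ p) / 2 := by
  obtain ⟨c₁, hc₁, h1⟩ := aux_one_dim hp
  have hp0 : (0:ℝ) < p := by linarith
  have h2p : (0:ℝ) < 2 ^ p := Real.rpow_pos_of_pos two_pos p
  refine ⟨c₁ / 2 ^ p, by positivity, ?_⟩
  have H : ∀ a b : ℝ, 0 ≤ b → b ≤ a →
      c₁ / 2 ^ p * ((a - b) ^ 2 * (a + b) ^ (p - 2)) + ((a + b) / 2) ^ p
        ≤ (a ^ p + b ^ p) / 2 := by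
    intro a b hb hba
    have ha : 0 ≤ a := le_trans hb hba
    rcases eq_or_lt_of_le (add_nonneg ha hb) with hs0 | hs
    · -- a + b = 0, hence a = b = 0
      have ha0 : a = 0 := by linarith
      have hb0 : b = 0 := by linarith
      subst ha0; subst hb0
      simp [Real.zero_rpow hp0.ne']
    · set s : ℝ := a + b with hsdef
      set t : ℝ := (a - b) / s with htdef
      have hsne : s ≠ 0 := ne_of_gt hs
      have ht0 : 0 ≤ t := div_nonneg (by linarith) (le_of_lt hs)
      have ht1 : t ≤ 1 := by
        rw [div_le_one hs]; linarith
      have hpos : (0:ℝ) < (s / 2) ^ p := Real.rpow_pos_of_pos (by linarith) p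
      have key := mul_le_mul_of_nonneg_left (h1 t ht0 ht1) (le_of_lt hpos)
      have hab : a + b ≠ 0 := hsne
      have e1 : (s / 2) ^ p * (1 + t) ^ p = a ^ p := by
        rw [← Real.mul_rpow (by linarith) (by linarith)]
        congr 1
        rw [htdef, hsdef]
        field_simp [hab]
        ring
      have e2 : (s / 2) ^ p * (1 - t) ^ p = b ^ p := by
        rw [← Real.mul_rpow (by linarith) (by linarith)]
        congr 1
        rw [htdef, hsdef]
        field_simp [hab]
        ring
      have e3 : (s / 2) ^ p * (c₁ * t ^ 2) = c₁ / 2 ^ p * ((a - b) ^ 2 * s ^ (p - 2)) := by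
        have hd : (s / 2) ^ p = s ^ p / 2 ^ p := Real.div_rpow (le_of_lt hs) (by norm_num) p
        have hsp : s ^ (p - 2) = s ^ p / s ^ (2:ℝ) := Real.rpow_sub hs p 2
        have hs2 : s ^ (2:ℝ) = s ^ (2:ℕ) := Real.rpow_two s
        rw [hd, hsp, hs2, htdef]
        have hs2ne : s ^ (2:ℕ) ≠ 0 := pow_ne_zero 2 hsne
        field_simp
      calc c₁ / 2 ^ p * ((a - b) ^ 2 * s ^ (p - 2)) + (s / 2) ^ p
          = (s / 2) ^ p * (1 + c₁ * t ^ 2) := by rw [mul_add, mul_one, e3]; ring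
        _ ≤ (s / 2) ^ p * (((1 + t) ^ p + (1 - t) ^ p) / 2) := key
        _ = ((s / 2) ^ p * (1 + t) ^ p + (s / 2) ^ p * (1 - t) ^ p) / 2 := by ring
        _ = (a ^ p + b ^ p) / 2 := by rw [e1, e2]
  intro a b ha hb
  rcases le_total b a with h | h
  · exact H a b hb h
  · have := H b a ha h
    have e1 : (b - a) ^ 2 = (a - b) ^ 2 := by ring
    have e2 : b + a = a + b := by ring
    rw [e1, e2] at this
    linarith

/-- `(A + B)^p ≤ 2^p * (A^p + B^p)` in `ℝ≥0∞`. -/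
lemma aux_two_rpow {p : ℝ} (hp : 0 ≤ p) (A B : ℝ≥0∞) :
    (A + B) ^ p ≤ 2 ^ p * (A ^ p + B ^ p) := by
  have h1 : A + B ≤ 2 * max A B := by
    calc A + B ≤ max A B + max A B := add_le_add (le_max_left _ _) (le_max_right _ _)
      _ = 2 * max A B := (two_mul _).symm
  calc (A + B) ^ p ≤ (2 * max A B) ^ p := ENNReal.rpow_le_rpow h1 hp
    _ = 2 ^ p * (max A B) ^ p := ENNReal.mul_rpow_of_nonneg _ _ hp
    _ ≤ 2 ^ p * (A ^ p + B ^ p) := by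
        refine mul_le_mul_right ?_ _
        rcases le_total A B with h | h
        · rw [max_eq_right h]; exact le_add_self
        · rw [max_eq_left h]; exact le_self_add

end AxSobAux
namespace AxSob

open MeasureTheory

variable {X : Type*} [MetricSpace X] [MeasurableSpace X]
variable {m : MeasureTheory.Measure X} {p : ℝ}

lemma lpIntOn_univ_eq (m : MeasureTheory.Measure X) {p : ℝ} (hp : 0 < p) (f : X → ℝ) :
    lpIntOn m p f Set.univ = ∫⁻ x, ENNReal.ofReal (|f x| ^ p) ∂m := by
  rw [lpIntOn, MeasureTheory.Measure.restrict_univ]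
  exact lintegral_congr fun x => ENNReal.ofReal_rpow_of_nonneg (abs_nonneg _) hp.le

lemma lpIntOn_swap (m : MeasureTheory.Measure X) (p : ℝ) (f g : X → ℝ) (B : Set X) :
    lpIntOn m p (fun x => f x - g x) B = lpIntOn m p (fun x => g x - f x) B := by
  unfold lpIntOn
  exact lintegral_congr fun x => by rw [abs_sub_comm]

namespace DStructure

/-- Existence of the minimal pseudo-gradient, for `1 < p < ∞`. -/
lemma exists_minimalPG (hp : 1 < p) (S : DStructure X m p) {u : X → ℝ}
    (hu : u ∈ S.SobolevClass) : ∃ g, S.IsMinimalPG u g := by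
  obtain ⟨huloc, huE⟩ := hu
  have hp0 : (0:ℝ) < p := by linarith
  have hE : S.energy u ≠ ∞ := huE.ne
  have hElow : ∀ g ∈ S.D u, S.energy u ≤ lpIntOn m p g Set.univ := by
    intro g hg
    simp only [DStructure.energy, DStructure.energyOn]
    exact iInf₂_le g hg
  -- minimizing sequence
  have hex : ∀ n : ℕ, ∃ g, g ∈ S.D u ∧
      lpIntOn m p g Set.univ < S.energy u + (↑(n+1) : ℝ≥0∞)⁻¹ := by
    intro n
    have hlt : S.energy u < S.energy u + (↑(n+1) : ℝ≥0∞)⁻¹ :=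
      ENNReal.lt_add_right hE (by simp)
    rw [DStructure.energy, DStructure.energyOn] at hlt
    obtain ⟨g, hg⟩ := iInf_lt_iff.1 hlt
    obtain ⟨hgD, hglt⟩ := iInf_lt_iff.1 hg
    exact ⟨g, hgD, hglt⟩
  choose gs hgsD hgsE using hex
  have hgsm : ∀ n, Measurable (gs n) := fun n => S.measurable_of_mem u (gs n) (hgsD n)
  have hgs0 : ∀ n (x : X), 0 ≤ gs n x := fun n x => (S.nonneg_of_mem u (gs n) (hgsD n)) x
  have hεfin : ∀ n : ℕ, ((↑(n+1) : ℝ≥0∞)⁻¹) ≠ ∞ := fun n => by simp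
  have hgsfin : ∀ n, lpIntOn m p (gs n) Set.univ < ∞ := fun n =>
    (hgsE n).trans (ENNReal.add_lt_top.2 ⟨huE, (hεfin n).lt_top⟩)
  -- midpoints are pseudo-gradients
  have hmid : ∀ j l : ℕ, (fun x => (gs j x + gs l x) / 2) ∈ S.D u := by
    intro j l
    have h := S.axiomA2 u u (gs j) (gs l) (fun x => (gs j x + gs l x) / 2) (1/2) (1/2)
      huloc huloc (hgsD j) (hgsD l)
      (((hgsm j).add (hgsm l)).div_const 2)
      (fun x => div_nonneg (add_nonneg (hgs0 j x) (hgs0 l x)) (by norm_num))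
      (Filter.Eventually.of_forall (fun x => le_of_eq (by
        rw [abs_of_pos (by norm_num : (0:ℝ) < 1/2)]; ring)))
    rwa [S.congr_ae _ u (Filter.Eventually.of_forall (fun x => by ring))] at h
  -- the uniform convexity gap
  obtain ⟨c, hc, hgap⟩ := AxSobAux.aux_gap hp
  set Q : ℕ → ℕ → X → ℝ := fun j l x =>
    (gs j x - gs l x) ^ 2 * (gs j x + gs l x) ^ (p - 2) with hQdef
  set Δ : ℕ → ℕ → X → ℝ := fun j l x =>
    (gs j x ^ p + gs l x ^ p) / 2 - ((gs j x + gs l x) / 2) ^ p with hΔdef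
  have hQnn : ∀ j l x, 0 ≤ Q j l x := fun j l x =>
    mul_nonneg (sq_nonneg _) (Real.rpow_nonneg (add_nonneg (hgs0 j x) (hgs0 l x)) _)
  have hΔ0 : ∀ j l (x : X), 0 ≤ Δ j l x ∧ c * Q j l x ≤ Δ j l x := by
    intro j l x
    have h := hgap (gs j x) (gs l x) (hgs0 j x) (hgs0 l x)
    have h2 := mul_nonneg hc.le (hQnn j l x)
    constructor
    · simp only [hΔdef]; simp only [hQdef] at h2 h; nlinarith
    · simp only [hΔdef, hQdef]; nlinarith
  have hmQ : ∀ j l, Measurable (Q j l) := fun j l =>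
    (((hgsm j).sub (hgsm l)).pow measurable_const).mul
      (((hgsm j).add (hgsm l)).pow measurable_const)
  have hmΔ : ∀ j l, Measurable (Δ j l) := fun j l =>
    ((((hgsm j).pow measurable_const).add ((hgsm l).pow measurable_const)).div_const 2).sub
      ((((hgsm j).add (hgsm l)).div_const 2).pow measurable_const)
  -- the pinching estimate
  have hpinch : ∀ j l : ℕ, (∫⁻ x, ENNReal.ofReal (Δ j l x) ∂m)
      ≤ (↑(j+1) : ℝ≥0∞)⁻¹ + (↑(l+1) : ℝ≥0∞)⁻¹ := by
    intro j l
    have hpt : ∀ x, ENNReal.ofReal (Δ j l x)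
        + ENNReal.ofReal (|(gs j x + gs l x)/2| ^ p)
        = ENNReal.ofReal ((gs j x ^ p + gs l x ^ p) / 2) := by
      intro x
      rw [← ENNReal.ofReal_add (hΔ0 j l x).1 (Real.rpow_nonneg (abs_nonneg _) _)]
      congr 1
      rw [abs_of_nonneg (div_nonneg (add_nonneg (hgs0 j x) (hgs0 l x)) (by norm_num))]
      simp only [hΔdef]; ring
    have hint : (∫⁻ x, ENNReal.ofReal (Δ j l x) ∂m)
        + lpIntOn m p (fun x => (gs j x + gs l x) / 2) Set.univ
        = ∫⁻ x, ENNReal.ofReal ((gs j x ^ p + gs l x ^ p) / 2) ∂m := by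
      rw [lpIntOn_univ_eq m hp0, ← lintegral_add_left ((hmΔ j l).ennreal_ofReal)]
      exact lintegral_congr hpt
    have hhalf : (∫⁻ x, ENNReal.ofReal ((gs j x ^ p + gs l x ^ p) / 2) ∂m)
        + (∫⁻ x, ENNReal.ofReal ((gs j x ^ p + gs l x ^ p) / 2) ∂m)
        = lpIntOn m p (gs j) Set.univ + lpIntOn m p (gs l) Set.univ := by
      have hm2 : Measurable fun x => ENNReal.ofReal ((gs j x ^ p + gs l x ^ p) / 2) :=
        ((((hgsm j).pow measurable_const).add
          ((hgsm l).pow measurable_const)).div_const 2).ennreal_ofReal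
      rw [← lintegral_add_left hm2, lpIntOn_univ_eq m hp0, lpIntOn_univ_eq m hp0,
        ← lintegral_add_left (((hgsm j).abs.pow measurable_const).ennreal_ofReal)]
      apply lintegral_congr
      intro x
      have hnn : 0 ≤ (gs j x ^ p + gs l x ^ p) / 2 :=
        div_nonneg (add_nonneg (Real.rpow_nonneg (hgs0 j x) p)
          (Real.rpow_nonneg (hgs0 l x) p)) (by norm_num)
      rw [← ENNReal.ofReal_add hnn hnn,
        ← ENNReal.ofReal_add (Real.rpow_nonneg (abs_nonneg _) _)
          (Real.rpow_nonneg (abs_nonneg _) _)]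
      congr 1
      rw [abs_of_nonneg (hgs0 j x), abs_of_nonneg (hgs0 l x)]
      ring
    have hEE : S.energy u + S.energy u ≠ ∞ := by
      simp [ENNReal.add_eq_top, hE]
    have h3 : (S.energy u + S.energy u)
        + ((∫⁻ x, ENNReal.ofReal (Δ j l x) ∂m) + (∫⁻ x, ENNReal.ofReal (Δ j l x) ∂m))
        ≤ (S.energy u + S.energy u) + ((↑(j+1) : ℝ≥0∞)⁻¹ + (↑(l+1) : ℝ≥0∞)⁻¹) := by
      have hMi := hElow _ (hmid j l)
      calc (S.energy u + S.energy u)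
          + ((∫⁻ x, ENNReal.ofReal (Δ j l x) ∂m) + (∫⁻ x, ENNReal.ofReal (Δ j l x) ∂m))
          ≤ (lpIntOn m p (fun x => (gs j x + gs l x) / 2) Set.univ
              + lpIntOn m p (fun x => (gs j x + gs l x) / 2) Set.univ)
            + ((∫⁻ x, ENNReal.ofReal (Δ j l x) ∂m) + (∫⁻ x, ENNReal.ofReal (Δ j l x) ∂m)) :=
            add_le_add (add_le_add hMi hMi) le_rfl
        _ = (∫⁻ x, ENNReal.ofReal ((gs j x ^ p + gs l x ^ p) / 2) ∂m)
            + (∫⁻ x, ENNReal.ofReal ((gs j x ^ p + gs l x ^ p) / 2) ∂m) := by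
            rw [← hint]; ring
        _ = lpIntOn m p (gs j) Set.univ + lpIntOn m p (gs l) Set.univ := hhalf
        _ ≤ (S.energy u + (↑(j+1) : ℝ≥0∞)⁻¹) + (S.energy u + (↑(l+1) : ℝ≥0∞)⁻¹) :=
            add_le_add (hgsE j).le (hgsE l).le
        _ = (S.energy u + S.energy u) + ((↑(j+1) : ℝ≥0∞)⁻¹ + (↑(l+1) : ℝ≥0∞)⁻¹) := by ring
    have h4 := (ENNReal.add_le_add_iff_left hEE).1 h3
    exact le_trans le_self_add h4
  have hlpe : ∀ n, lpIntOn m p (gs n) Set.univ = ∫⁻ x, ENNReal.ofReal (gs n x ^ p) ∂m := by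
    intro n
    rw [lpIntOn_univ_eq m hp0]
    exact lintegral_congr fun x => by rw [abs_of_nonneg (hgs0 n x)]
  -- the quantitative gap integral bound
  have hQint : ∀ j l : ℕ, (∫⁻ x, ENNReal.ofReal (Q j l x) ∂m)
      ≤ ENNReal.ofReal c⁻¹ * ((↑(j+1) : ℝ≥0∞)⁻¹ + (↑(l+1) : ℝ≥0∞)⁻¹) := by
    intro j l
    have hpt : ∀ x, ENNReal.ofReal (Q j l x)
        ≤ ENNReal.ofReal c⁻¹ * ENNReal.ofReal (Δ j l x) := by
      intro x
      rw [← ENNReal.ofReal_mul (inv_nonneg.2 hc.le)]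
      apply ENNReal.ofReal_le_ofReal
      calc Q j l x = c⁻¹ * (c * Q j l x) := by field_simp
        _ ≤ c⁻¹ * Δ j l x :=
          mul_le_mul_of_nonneg_left (hΔ0 j l x).2 (inv_nonneg.2 hc.le)
    calc (∫⁻ x, ENNReal.ofReal (Q j l x) ∂m)
        ≤ ∫⁻ x, ENNReal.ofReal c⁻¹ * ENNReal.ofReal (Δ j l x) ∂m := lintegral_mono hpt
      _ = ENNReal.ofReal c⁻¹ * ∫⁻ x, ENNReal.ofReal (Δ j l x) ∂m :=
          lintegral_const_mul' _ _ ENNReal.ofReal_ne_top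
      _ ≤ _ := mul_le_mul_right (hpinch j l) _
  -- main Cauchy-type estimate
  have hmain : ∃ K : ℝ≥0∞, K ≠ ∞ ∧ ∃ θ : ℝ, 0 < θ ∧ ∀ j l : ℕ,
      lpIntOn m p (fun x => gs j x - gs l x) Set.univ
        ≤ K * ((↑(j+1) : ℝ≥0∞)⁻¹ + (↑(l+1) : ℝ≥0∞)⁻¹) ^ θ := by
    rcases le_or_gt 2 p with h2 | h2
    · -- case p ≥ 2
      refine ⟨ENNReal.ofReal c⁻¹, ENNReal.ofReal_ne_top, 1, one_pos, ?_⟩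
      intro j l
      rw [lpIntOn_univ_eq m hp0]
      have hpt : ∀ x, ENNReal.ofReal (|gs j x - gs l x| ^ p)
          ≤ ENNReal.ofReal (Q j l x) := by
        intro x
        apply ENNReal.ofReal_le_ofReal
        simp only [hQdef]
        rcases eq_or_ne (gs j x) (gs l x) with he | hne
        · rw [he, sub_self, abs_zero, Real.zero_rpow hp0.ne']
          exact mul_nonneg (sq_nonneg _)
            (Real.rpow_nonneg (add_nonneg (hgs0 l x) (hgs0 l x)) _)
        · have hd : 0 < |gs j x - gs l x| := abs_pos.2 (sub_ne_zero.2 hne)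
          have hab : |gs j x - gs l x| ≤ gs j x + gs l x :=
            abs_le.2 ⟨by nlinarith [hgs0 j x, hgs0 l x], by nlinarith [hgs0 j x, hgs0 l x]⟩
          calc |gs j x - gs l x| ^ p
              = |gs j x - gs l x| ^ (2:ℝ) * |gs j x - gs l x| ^ (p - 2) := by
                rw [← Real.rpow_add hd]; norm_num
            _ ≤ |gs j x - gs l x| ^ (2:ℝ) * (gs j x + gs l x) ^ (p - 2) :=
                mul_le_mul_of_nonneg_left
                  (Real.rpow_le_rpow (abs_nonneg _) hab (by linarith))
                  (Real.rpow_nonneg (abs_nonneg _) _)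
            _ = (gs j x - gs l x) ^ 2 * (gs j x + gs l x) ^ (p - 2) := by
                rw [Real.rpow_two, sq_abs]
      calc (∫⁻ x, ENNReal.ofReal (|gs j x - gs l x| ^ p) ∂m)
          ≤ ∫⁻ x, ENNReal.ofReal (Q j l x) ∂m := lintegral_mono hpt
        _ ≤ ENNReal.ofReal c⁻¹ * ((↑(j+1) : ℝ≥0∞)⁻¹ + (↑(l+1) : ℝ≥0∞)⁻¹) := hQint j l
        _ = ENNReal.ofReal c⁻¹ * ((↑(j+1) : ℝ≥0∞)⁻¹ + (↑(l+1) : ℝ≥0∞)⁻¹) ^ (1:ℝ) := by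
            rw [ENNReal.rpow_one]
    · -- case 1 < p < 2 : use Hölder
      have hM : ∀ j : ℕ, lpIntOn m p (gs j) Set.univ ≤ S.energy u + 1 := by
        intro j
        refine le_trans (hgsE j).le (add_le_add_right ?_ _)
        exact ENNReal.inv_le_one.2 (by exact_mod_cast Nat.succ_le_succ (Nat.zero_le j))
      set M : ℝ≥0∞ := (2:ℝ≥0∞) ^ p * ((S.energy u + 1) + (S.energy u + 1)) with hMdef
      have hMne : M ≠ ∞ := by
        rw [hMdef]
        refine ENNReal.mul_ne_top (ENNReal.rpow_ne_top_of_nonneg hp0.le (by simp)) ?_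
        simp [ENNReal.add_eq_top, hE]
      have hYle : ∀ j l : ℕ, (∫⁻ x, ENNReal.ofReal ((gs j x + gs l x) ^ p) ∂m) ≤ M := by
        intro j l
        have hpt : ∀ x, ENNReal.ofReal ((gs j x + gs l x) ^ p)
            ≤ (2:ℝ≥0∞) ^ p * (ENNReal.ofReal (gs j x ^ p) + ENNReal.ofReal (gs l x ^ p)) := by
          intro x
          calc ENNReal.ofReal ((gs j x + gs l x) ^ p)
              = (ENNReal.ofReal (gs j x) + ENNReal.ofReal (gs l x)) ^ p := by
                rw [← ENNReal.ofReal_add (hgs0 j x) (hgs0 l x),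
                  ENNReal.ofReal_rpow_of_nonneg (add_nonneg (hgs0 j x) (hgs0 l x)) hp0.le]
            _ ≤ (2:ℝ≥0∞) ^ p * (ENNReal.ofReal (gs j x) ^ p + ENNReal.ofReal (gs l x) ^ p) :=
                AxSobAux.aux_two_rpow hp0.le _ _
            _ = (2:ℝ≥0∞) ^ p * (ENNReal.ofReal (gs j x ^ p) + ENNReal.ofReal (gs l x ^ p)) := by
                rw [ENNReal.ofReal_rpow_of_nonneg (hgs0 j x) hp0.le,
                  ENNReal.ofReal_rpow_of_nonneg (hgs0 l x) hp0.le]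
        calc (∫⁻ x, ENNReal.ofReal ((gs j x + gs l x) ^ p) ∂m)
            ≤ ∫⁻ x, (2:ℝ≥0∞) ^ p * (ENNReal.ofReal (gs j x ^ p) + ENNReal.ofReal (gs l x ^ p)) ∂m :=
              lintegral_mono hpt
          _ = (2:ℝ≥0∞) ^ p * ∫⁻ x, (ENNReal.ofReal (gs j x ^ p) + ENNReal.ofReal (gs l x ^ p)) ∂m :=
              lintegral_const_mul' _ _ (ENNReal.rpow_ne_top_of_nonneg hp0.le (by simp))
          _ = (2:ℝ≥0∞) ^ p * ((∫⁻ x, ENNReal.ofReal (gs j x ^ p) ∂m)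
              + (∫⁻ x, ENNReal.ofReal (gs l x ^ p) ∂m)) := by
              rw [lintegral_add_left (((hgsm j).pow measurable_const).ennreal_ofReal)]
          _ = (2:ℝ≥0∞) ^ p * (lpIntOn m p (gs j) Set.univ + lpIntOn m p (gs l) Set.univ) := by
              rw [hlpe j, hlpe l]
          _ ≤ M := by
              rw [hMdef]
              exact mul_le_mul_right (add_le_add (hM j) (hM l)) _
      refine ⟨(ENNReal.ofReal c⁻¹) ^ (p/2) * M ^ ((2-p)/2), ?_, p/2, by positivity, ?_⟩
      · exact ENNReal.mul_ne_top
          (ENNReal.rpow_ne_top_of_nonneg (by positivity) ENNReal.ofReal_ne_top)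
          (ENNReal.rpow_ne_top_of_nonneg (by linarith) hMne)
      intro j l
      rw [lpIntOn_univ_eq m hp0]
      have hconj : Real.HolderConjugate (2/p) (2/(2-p)) := by
        rw [Real.holderConjugate_iff]
        constructor
        · rw [lt_div_iff₀ hp0]; linarith
        · rw [inv_div, inv_div]; field_simp; ring
      have hpt : ∀ x, ENNReal.ofReal (|gs j x - gs l x| ^ p)
          ≤ (ENNReal.ofReal (Q j l x)) ^ (p/2)
            * (ENNReal.ofReal ((gs j x + gs l x) ^ p)) ^ ((2-p)/2) := by
        intro x
        set a := gs j x
        set b := gs l x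
        have ha : 0 ≤ a := hgs0 j x
        have hb : 0 ≤ b := hgs0 l x
        rw [ENNReal.ofReal_rpow_of_nonneg (hQnn j l x) (by positivity),
          ENNReal.ofReal_rpow_of_nonneg (Real.rpow_nonneg (by linarith) p) (by linarith),
          ← ENNReal.ofReal_mul (Real.rpow_nonneg (hQnn j l x) _)]
        apply ENNReal.ofReal_le_ofReal
        rcases eq_or_lt_of_le (add_nonneg ha hb) with hs0 | hs
        · -- a = b = 0
          have ha0 : a = 0 := by linarith
          have hb0 : b = 0 := by linarith
          rw [ha0, hb0]
          simp [Real.zero_rpow hp0.ne']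
          positivity
        · apply le_of_eq
          simp only [hQdef]
          rw [Real.mul_rpow (sq_nonneg _) (Real.rpow_nonneg (by linarith) _)]
          rw [← sq_abs (a - b), ← Real.rpow_two |a - b|,
            ← Real.rpow_mul (abs_nonneg _), ← Real.rpow_mul (by linarith : (0:ℝ) ≤ a + b),
            ← Real.rpow_mul (by linarith : (0:ℝ) ≤ a + b)]
          rw [mul_assoc, ← Real.rpow_add hs]
          rw [show (p-2) * (p/2) + p * ((2-p)/2) = 0 by ring, Real.rpow_zero, mul_one]
          rw [show (2:ℝ) * (p/2) = p by ring]
      have hH := ENNReal.lintegral_mul_le_Lp_mul_Lq m hconj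
        (f := fun x => (ENNReal.ofReal (Q j l x)) ^ (p/2))
        (g := fun x => (ENNReal.ofReal ((gs j x + gs l x) ^ p)) ^ ((2-p)/2))
        (((((hmQ j l).ennreal_ofReal).pow measurable_const).aemeasurable))
        (((((hgsm j).add (hgsm l)).pow measurable_const).ennreal_ofReal.pow
          measurable_const).aemeasurable)
      simp only [Pi.mul_apply] at hH
      have hcol1 : (∫⁻ x, ((ENNReal.ofReal (Q j l x)) ^ (p/2)) ^ (2/p) ∂m) ^ (1/(2/p))
          = (∫⁻ x, ENNReal.ofReal (Q j l x) ∂m) ^ (p/2) := by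
        rw [one_div, inv_div]
        congr 1
        apply lintegral_congr
        intro x
        rw [← ENNReal.rpow_mul, show (p/2) * (2/p) = 1 by field_simp, ENNReal.rpow_one]
      have hcol2 : (∫⁻ x, ((ENNReal.ofReal ((gs j x + gs l x) ^ p)) ^ ((2-p)/2)) ^ (2/(2-p)) ∂m)
            ^ (1/(2/(2-p)))
          = (∫⁻ x, ENNReal.ofReal ((gs j x + gs l x) ^ p) ∂m) ^ ((2-p)/2) := by
        rw [one_div, inv_div]
        congr 1
        apply lintegral_congr
        intro x
        rw [← ENNReal.rpow_mul, show ((2-p)/2) * (2/(2-p)) = 1 by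
          field_simp [sub_ne_zero.2 h2.ne'], ENNReal.rpow_one]
      calc (∫⁻ x, ENNReal.ofReal (|gs j x - gs l x| ^ p) ∂m)
          ≤ ∫⁻ x, (ENNReal.ofReal (Q j l x)) ^ (p/2)
              * (ENNReal.ofReal ((gs j x + gs l x) ^ p)) ^ ((2-p)/2) ∂m := lintegral_mono hpt
        _ ≤ (∫⁻ x, ((ENNReal.ofReal (Q j l x)) ^ (p/2)) ^ (2/p) ∂m) ^ (1/(2/p))
            * (∫⁻ x, ((ENNReal.ofReal ((gs j x + gs l x) ^ p)) ^ ((2-p)/2)) ^ (2/(2-p)) ∂m)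
              ^ (1/(2/(2-p))) := hH
        _ = (∫⁻ x, ENNReal.ofReal (Q j l x) ∂m) ^ (p/2)
            * (∫⁻ x, ENNReal.ofReal ((gs j x + gs l x) ^ p) ∂m) ^ ((2-p)/2) := by
            rw [hcol1, hcol2]
        _ ≤ (ENNReal.ofReal c⁻¹ * ((↑(j+1) : ℝ≥0∞)⁻¹ + (↑(l+1) : ℝ≥0∞)⁻¹)) ^ (p/2)
            * M ^ ((2-p)/2) := by
            exact mul_le_mul' (ENNReal.rpow_le_rpow (hQint j l) (by positivity))
              (ENNReal.rpow_le_rpow (hYle j l) (by linarith))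
        _ = (ENNReal.ofReal c⁻¹) ^ (p/2) * M ^ ((2-p)/2)
            * ((↑(j+1) : ℝ≥0∞)⁻¹ + (↑(l+1) : ℝ≥0∞)⁻¹) ^ (p/2) := by
            rw [ENNReal.mul_rpow_of_nonneg _ _ (by positivity : (0:ℝ) ≤ p/2)]
            ring
  obtain ⟨K, hKne, θ, hθ, hDI⟩ := hmain
  -- Cauchy modulus
  have key : ∀ ε : ℝ≥0∞, ε ≠ 0 → ∃ N : ℕ, ∀ j l, N ≤ j → N ≤ l →
      lpIntOn m p (fun x => gs j x - gs l x) Set.univ ≤ ε := by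
    intro ε hε
    rcases eq_or_ne K 0 with hK0 | hK0
    · exact ⟨0, fun j l _ _ => le_trans (hDI j l)
        (by rw [hK0, zero_mul]; exact zero_le)⟩
    have hδ0 : (ε / K) ^ (1/θ) ≠ 0 := by
      rw [Ne, ENNReal.rpow_eq_zero_iff]
      rintro (⟨h0, -⟩ | ⟨-, hneg⟩)
      · rw [ENNReal.div_eq_zero_iff] at h0
        rcases h0 with h | h
        · exact hε h
        · exact hKne h
      · exact (not_lt.2 (by positivity : (0:ℝ) ≤ 1/θ)) hneg
    obtain ⟨n₀, hn₀⟩ := ENNReal.exists_inv_nat_lt hδ0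
    refine ⟨2 * n₀ + 1, fun j l hj hl => ?_⟩
    have hcast : ∀ k : ℕ, 2 * n₀ + 1 ≤ k → ((↑(k+1) : ℝ≥0∞))⁻¹ ≤ (↑(2 * (n₀ + 1)) : ℝ≥0∞)⁻¹ := by
      intro k hk
      rw [ENNReal.inv_le_inv]
      exact_mod_cast by omega
    have hsum2 : ((↑(j+1) : ℝ≥0∞)⁻¹ + (↑(l+1) : ℝ≥0∞)⁻¹) ≤ (↑n₀ : ℝ≥0∞)⁻¹ := by
      have h1 : ((↑(j+1) : ℝ≥0∞)⁻¹ + (↑(l+1) : ℝ≥0∞)⁻¹)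
          ≤ (↑(2 * (n₀ + 1)) : ℝ≥0∞)⁻¹ + (↑(2 * (n₀ + 1)) : ℝ≥0∞)⁻¹ :=
        add_le_add (hcast j hj) (hcast l hl)
      have h2 : (↑(2 * (n₀ + 1)) : ℝ≥0∞)⁻¹ + (↑(2 * (n₀ + 1)) : ℝ≥0∞)⁻¹
          = (↑(n₀ + 1) : ℝ≥0∞)⁻¹ := by
        rw [← two_mul, Nat.cast_mul, Nat.cast_ofNat,
          ENNReal.mul_inv (Or.inl (by norm_num)) (Or.inl (by norm_num)),
          ← mul_assoc, ENNReal.mul_inv_cancel (by norm_num) (by norm_num), one_mul]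
      have h3 : (↑(n₀ + 1) : ℝ≥0∞)⁻¹ ≤ (↑n₀ : ℝ≥0∞)⁻¹ := by
        rw [ENNReal.inv_le_inv]
        exact_mod_cast Nat.le_succ n₀
      exact h1.trans (h2.le.trans h3)
    calc lpIntOn m p (fun x => gs j x - gs l x) Set.univ
        ≤ K * ((↑(j+1) : ℝ≥0∞)⁻¹ + (↑(l+1) : ℝ≥0∞)⁻¹) ^ θ := hDI j l
      _ ≤ K * ((ε / K) ^ (1/θ)) ^ θ := by
          refine mul_le_mul_right (ENNReal.rpow_le_rpow (hsum2.trans hn₀.le) hθ.le) _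
      _ = K * (ε / K) := by
          rw [← ENNReal.rpow_mul, one_div, inv_mul_cancel₀ hθ.ne', ENNReal.rpow_one]
      _ = ε := ENNReal.mul_div_cancel hK0 hKne
  -- choice of rapidly convergent subsequence
  set ck : ℕ → ℝ≥0∞ := fun k => (ENNReal.ofReal ((1/2:ℝ)^k)) ^ p * ENNReal.ofReal ((1/2:ℝ)^k)
    with hckdef
  have hofr0 : ∀ k : ℕ, ENNReal.ofReal ((1/2:ℝ)^k) ≠ 0 := by
    intro k
    simp only [Ne, ENNReal.ofReal_eq_zero, not_le]
    positivity
  have hck0 : ∀ k, ck k ≠ 0 := by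
    intro k
    simp only [hckdef]
    refine mul_ne_zero ?_ (hofr0 k)
    rw [Ne, ENNReal.rpow_eq_zero_iff]
    push_neg
    exact ⟨fun h => absurd h (hofr0 k), fun h => absurd h ENNReal.ofReal_ne_top⟩
  choose Nf hNf using fun k => key (ck k) (hck0 k)
  let n : ℕ → ℕ := fun k => Nat.rec (Nf 0) (fun k ih => max (ih + 1) (Nf (k+1))) k
  have hn_succ : ∀ k, n (k+1) = max (n k + 1) (Nf (k+1)) := fun k => rfl
  have hnsm : StrictMono n := strictMono_nat_of_lt_succ (fun k =>
    lt_of_lt_of_le (Nat.lt_succ_self _) (by rw [hn_succ]; exact le_max_left _ _))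
  have hnN : ∀ k, Nf k ≤ n k := by
    intro k
    cases k with
    | zero => exact le_refl _
    | succ k => rw [hn_succ]; exact le_max_right _ _
  have hbnd : ∀ k l, k ≤ l →
      lpIntOn m p (fun x => gs (n k) x - gs (n l) x) Set.univ ≤ ck k :=
    fun k l hkl => hNf k (n k) (n l) (hnN k) (le_trans (hnN k) (hnsm.monotone hkl))
  -- Borel–Cantelli
  set A : ℕ → Set X := fun k => {x | (1/2:ℝ)^k ≤ |gs (n (k+1)) x - gs (n k) x|} with hAdef
  have hmA : ∀ k, m (A k) ≤ ENNReal.ofReal ((1/2:ℝ)^k) := by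
    intro k
    have hmk : AEMeasurable (fun x => ENNReal.ofReal (|gs (n (k+1)) x - gs (n k) x| ^ p)) m :=
      ((((hgsm _).sub (hgsm _)).abs.pow measurable_const).ennreal_ofReal).aemeasurable
    have hmark := mul_meas_ge_le_lintegral₀ hmk (ENNReal.ofReal (((1/2:ℝ)^k) ^ p))
    have hsub : A k ⊆ {x | ENNReal.ofReal (((1/2:ℝ)^k) ^ p)
        ≤ ENNReal.ofReal (|gs (n (k+1)) x - gs (n k) x| ^ p)} := by
      intro x hx
      exact ENNReal.ofReal_le_ofReal (Real.rpow_le_rpow (by positivity) hx hp0.le)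
    have h1 : ENNReal.ofReal (((1/2:ℝ)^k) ^ p) * m (A k)
        ≤ lpIntOn m p (fun x => gs (n (k+1)) x - gs (n k) x) Set.univ := by
      rw [lpIntOn_univ_eq m hp0]
      exact le_trans (mul_le_mul_right (measure_mono hsub) _) hmark
    have h2 : ENNReal.ofReal (((1/2:ℝ)^k) ^ p) * m (A k) ≤ ck k := by
      refine h1.trans ?_
      rw [lpIntOn_swap]
      exact hbnd k (k+1) (Nat.le_succ _)
    have hne0 : ENNReal.ofReal (((1/2:ℝ)^k) ^ p) ≠ 0 := by
      simp only [Ne, ENNReal.ofReal_eq_zero, not_le]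
      positivity
    have hckeq : ck k = ENNReal.ofReal (((1/2:ℝ)^k) ^ p) * ENNReal.ofReal ((1/2:ℝ)^k) := by
      simp only [hckdef]
      rw [ENNReal.ofReal_rpow_of_nonneg (by positivity) hp0.le]
    rw [hckeq] at h2
    exact (ENNReal.mul_le_mul_iff_right hne0 ENNReal.ofReal_ne_top).1 h2
  have hsumA : (∑' k, m (A k)) ≠ ∞ := by
    have hle := ENNReal.tsum_le_tsum hmA
    have heq : (∑' k : ℕ, ENNReal.ofReal ((1/2:ℝ)^k))
        = (1 - ENNReal.ofReal (1/2:ℝ))⁻¹ := by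
      rw [show (fun k : ℕ => ENNReal.ofReal ((1/2:ℝ)^k))
          = fun k : ℕ => (ENNReal.ofReal (1/2:ℝ))^k from
        funext fun k => ENNReal.ofReal_pow (by norm_num) k]
      exact ENNReal.tsum_geometric _
    refine ne_top_of_le_ne_top ?_ (hle.trans heq.le)
    rw [ENNReal.inv_ne_top]
    rw [Ne, tsub_eq_zero_iff_le, not_le]
    exact ENNReal.ofReal_lt_one.2 (by norm_num)
  have hae := MeasureTheory.ae_eventually_notMem hsumA
  -- the a.e. limit
  set h₀ : X → ℝ≥0∞ := fun x => liminf (fun k => ENNReal.ofReal (gs (n k) x)) atTop with hh₀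
  have hh₀m : Measurable h₀ := Measurable.liminf (fun k => (hgsm (n k)).ennreal_ofReal)
  set g₀ : X → ℝ := fun x => (h₀ x).toReal with hg₀def
  have hg₀m : Measurable g₀ := hh₀m.ennreal_toReal
  have hg₀0 : (0:X → ℝ) ≤ g₀ := fun x => ENNReal.toReal_nonneg
  have htend : ∀ᵐ x ∂m, Tendsto (fun k => gs (n k) x) atTop (𝓝 (g₀ x)) := by
    filter_upwards [hae] with x hx
    obtain ⟨K', hK'⟩ := eventually_atTop.1 hx
    have hdist : ∀ j : ℕ,
        dist (gs (n (j + K')) x) (gs (n (j + 1 + K')) x) ≤ (1/2:ℝ)^K' * (1/2)^j := by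
      intro j
      have hj := hK' (j + K') (Nat.le_add_left _ _)
      simp only [hAdef, Set.mem_setOf_eq, not_le] at hj
      rw [Real.dist_eq, abs_sub_comm, show j + 1 + K' = j + K' + 1 from by omega]
      calc |gs (n (j + K' + 1)) x - gs (n (j + K')) x| ≤ (1/2:ℝ)^(j + K') := hj.le
        _ = (1/2:ℝ)^K' * (1/2)^j := by rw [pow_add]; ring
    have hcau : CauchySeq (fun j => gs (n (j + K')) x) :=
      cauchySeq_of_le_geometric (1/2) ((1/2)^K') (by norm_num) hdist
    obtain ⟨ℓ, hℓ⟩ := cauchySeq_tendsto_of_complete hcau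
    have hfull : Tendsto (fun k => gs (n k) x) atTop (𝓝 ℓ) :=
      (tendsto_add_atTop_iff_nat K').1 hℓ
    have hℓ0 : 0 ≤ ℓ := ge_of_tendsto' hfull (fun k => hgs0 (n k) x)
    have hlim : h₀ x = ENNReal.ofReal ℓ :=
      ((ENNReal.continuous_ofReal.tendsto ℓ).comp hfull).liminf_eq
    have hgx : g₀ x = ℓ := by
      simp only [hg₀def, hlim, ENNReal.toReal_ofReal hℓ0]
    rw [hgx]
    exact hfull
  -- Fatou : distance of the subsequence to the limit
  have hFat : ∀ k, lpIntOn m p (fun x => gs (n k) x - g₀ x) Set.univ ≤ ck k := by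
    intro k
    rw [lpIntOn_univ_eq m hp0]
    have hptae : ∀ᵐ x ∂m, ENNReal.ofReal (|gs (n k) x - g₀ x| ^ p)
        = liminf (fun l => ENNReal.ofReal (|gs (n k) x - gs (n l) x| ^ p)) atTop := by
      filter_upwards [htend] with x hx
      have h1 : Tendsto (fun l => |gs (n k) x - gs (n l) x|) atTop
          (𝓝 (|gs (n k) x - g₀ x|)) :=
        (continuous_abs.tendsto _).comp (tendsto_const_nhds.sub hx)
      have h2 : Tendsto (fun l => |gs (n k) x - gs (n l) x| ^ p) atTop
          (𝓝 (|gs (n k) x - g₀ x| ^ p)) :=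
        (Real.continuousAt_rpow_const _ p (Or.inr hp0.le)).tendsto.comp h1
      exact (((ENNReal.continuous_ofReal.tendsto _).comp h2).liminf_eq).symm
    calc (∫⁻ x, ENNReal.ofReal (|gs (n k) x - g₀ x| ^ p) ∂m)
        = ∫⁻ x, liminf (fun l => ENNReal.ofReal (|gs (n k) x - gs (n l) x| ^ p)) atTop ∂m :=
          lintegral_congr_ae hptae
      _ ≤ liminf (fun l => ∫⁻ x, ENNReal.ofReal (|gs (n k) x - gs (n l) x| ^ p) ∂m) atTop :=
          lintegral_liminf_le
            (fun l => (((hgsm _).sub (hgsm _)).abs.pow measurable_const).ennreal_ofReal)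
      _ ≤ liminf (fun _ : ℕ => ck k) atTop := by
          refine liminf_le_liminf ?_
          filter_upwards [eventually_ge_atTop k] with l hl
          rw [← lpIntOn_univ_eq m hp0]
          exact hbnd k l hl
      _ = ck k := liminf_const _
  have hck_tend : Tendsto ck atTop (𝓝 0) := by
    have heq : ck = fun k : ℕ =>
        ((ENNReal.ofReal (1/2:ℝ))^p * ENNReal.ofReal (1/2:ℝ))^k := by
      funext k
      simp only [hckdef]
      rw [ENNReal.ofReal_pow (by norm_num), mul_pow]
      congr 1
      rw [← ENNReal.rpow_natCast (ENNReal.ofReal (1/2:ℝ)) k, ← ENNReal.rpow_mul,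
        mul_comm (k:ℝ) p, ENNReal.rpow_mul, ENNReal.rpow_natCast]
    rw [heq]
    apply ENNReal.tendsto_pow_atTop_nhds_zero_of_lt_one
    have hhalf1 : ENNReal.ofReal (1/2:ℝ) < 1 := ENNReal.ofReal_lt_one.2 (by norm_num)
    calc (ENNReal.ofReal (1/2:ℝ))^p * ENNReal.ofReal (1/2:ℝ)
        ≤ 1 * ENNReal.ofReal (1/2:ℝ) :=
          mul_le_mul_left (ENNReal.rpow_lt_one hhalf1 hp0).le _
      _ = ENNReal.ofReal (1/2:ℝ) := one_mul _
      _ < 1 := hhalf1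
  have hLpT : LpTendsto m p (fun k => gs (n k)) g₀ :=
    tendsto_of_tendsto_of_tendsto_of_le_of_le tendsto_const_nhds hck_tend
      (fun k => zero_le) hFat
  -- membership of the limit, via axiom A5
  have hg₀D : g₀ ∈ S.D u := by
    refine S.axiomA5 (fun _ => u) (fun k => gs (n k)) u g₀ (fun _ => huloc)
      (fun k => hgsD (n k)) (fun k => ⟨hgsm (n k), hgsfin (n k)⟩) huloc hg₀m hg₀0 ?_ hLpT
    intro B hB hBb
    have h0 : (fun _ : ℕ => lpIntOn m p (fun x => u x - u x) B) = fun _ : ℕ => (0:ℝ≥0∞) := by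
      funext k
      unfold lpIntOn
      simp [sub_self, ENNReal.zero_rpow_of_pos hp0]
    rw [h0]
    exact tendsto_const_nhds
  -- the limit attains the energy
  have hle : lpIntOn m p g₀ Set.univ ≤ S.energy u := by
    rw [lpIntOn_univ_eq m hp0]
    have hptae : ∀ᵐ x ∂m, ENNReal.ofReal (|g₀ x| ^ p)
        = liminf (fun k => ENNReal.ofReal (|gs (n k) x| ^ p)) atTop := by
      filter_upwards [htend] with x hx
      have h1 : Tendsto (fun k => |gs (n k) x|) atTop (𝓝 (|g₀ x|)) :=
        (continuous_abs.tendsto _).comp hx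
      have h2 := (Real.continuousAt_rpow_const _ p (Or.inr hp0.le)).tendsto.comp h1
      exact (((ENNReal.continuous_ofReal.tendsto _).comp h2).liminf_eq).symm
    calc (∫⁻ x, ENNReal.ofReal (|g₀ x| ^ p) ∂m)
        = ∫⁻ x, liminf (fun k => ENNReal.ofReal (|gs (n k) x| ^ p)) atTop ∂m :=
          lintegral_congr_ae hptae
      _ ≤ liminf (fun k => ∫⁻ x, ENNReal.ofReal (|gs (n k) x| ^ p) ∂m) atTop :=
          lintegral_liminf_le (fun k => ((hgsm _).abs.pow measurable_const).ennreal_ofReal)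
      _ ≤ liminf (fun k : ℕ => S.energy u + (↑(k+1) : ℝ≥0∞)⁻¹) atTop := by
          refine liminf_le_liminf (Filter.Eventually.of_forall (fun k => ?_))
          rw [← lpIntOn_univ_eq m hp0]
          refine le_trans (hgsE (n k)).le (add_le_add_right ?_ _)
          rw [ENNReal.inv_le_inv]
          exact_mod_cast Nat.succ_le_succ hnsm.le_apply
      _ = S.energy u := by
          have h0 : Tendsto (fun k : ℕ => (↑(k+1) : ℝ≥0∞)⁻¹) atTop (𝓝 0) :=
            ENNReal.tendsto_inv_nat_nhds_zero.comp (tendsto_add_atTop_nat 1)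
          have : Tendsto (fun k : ℕ => S.energy u + (↑(k+1) : ℝ≥0∞)⁻¹) atTop
              (𝓝 (S.energy u)) := by
            simpa using tendsto_const_nhds.add h0
          exact this.liminf_eq
  exact ⟨g₀, hg₀D, ⟨hg₀m, lt_of_le_of_lt hle huE⟩, le_antisymm hle (hElow g₀ hg₀D)⟩


end DStructure

end AxSob

namespace AxSob

open MeasureTheory

variable {X : Type*} [MetricSpace X] [MeasurableSpace X]
variable {m : MeasureTheory.Measure X} {p : ℝ}

lemma lpIntOn_add_lt_top (hp0 : 0 < p) {f g : X → ℝ} (hf : Measurable f) (hg : Measurable g)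
    {B : Set X} (hfB : lpIntOn m p f B < ∞) (hgB : lpIntOn m p g B < ∞) :
    lpIntOn m p (fun x => f x + g x) B < ∞ := by
  have hpt : ∀ x, ENNReal.ofReal (|f x + g x|) ^ p
      ≤ 2 ^ p * (ENNReal.ofReal (|f x|) ^ p + ENNReal.ofReal (|g x|) ^ p) := by
    intro x
    refine le_trans (ENNReal.rpow_le_rpow ?_ hp0.le) (AxSobAux.aux_two_rpow hp0.le _ _)
    rw [← ENNReal.ofReal_add (abs_nonneg _) (abs_nonneg _)]
    exact ENNReal.ofReal_le_ofReal (abs_add_le _ _)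
  have h2 : lpIntOn m p (fun x => f x + g x) B
      ≤ 2 ^ p * (lpIntOn m p f B + lpIntOn m p g B) := by
    unfold lpIntOn
    calc (∫⁻ x in B, ENNReal.ofReal (|f x + g x|) ^ p ∂m)
        ≤ ∫⁻ x in B, 2 ^ p * (ENNReal.ofReal (|f x|) ^ p + ENNReal.ofReal (|g x|) ^ p) ∂m :=
          lintegral_mono hpt
      _ = 2 ^ p * ∫⁻ x in B, (ENNReal.ofReal (|f x|) ^ p + ENNReal.ofReal (|g x|) ^ p) ∂m :=
          lintegral_const_mul' _ _ (ENNReal.rpow_ne_top_of_nonneg hp0.le (by simp))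
      _ = 2 ^ p * ((∫⁻ x in B, ENNReal.ofReal (|f x|) ^ p ∂m)
            + ∫⁻ x in B, ENNReal.ofReal (|g x|) ^ p ∂m) := by
          rw [lintegral_add_left ((hf.abs.ennreal_ofReal).pow measurable_const)]
  refine lt_of_le_of_lt h2 (ENNReal.mul_lt_top ?_ ?_)
  · exact (ENNReal.rpow_ne_top_of_nonneg hp0.le (by simp)).lt_top
  · exact ENNReal.add_lt_top.2 ⟨hfB, hgB⟩

lemma lpIntOn_sub_lt_top (hp0 : 0 < p) {f g : X → ℝ} (hf : Measurable f) (hg : Measurable g)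
    {B : Set X} (hfB : lpIntOn m p f B < ∞) (hgB : lpIntOn m p g B < ∞) :
    lpIntOn m p (fun x => f x - g x) B < ∞ := by
  have he : lpIntOn m p (fun x => f x - g x) B
      = lpIntOn m p (fun x => f x + -(g x)) B := by
    unfold lpIntOn
    exact lintegral_congr fun x => by simp only [sub_eq_add_neg]
  have hgneg : lpIntOn m p (fun x => -(g x)) B = lpIntOn m p g B := by
    unfold lpIntOn
    exact lintegral_congr fun x => by rw [abs_neg]
  rw [he]
  exact lpIntOn_add_lt_top hp0 hf hg.neg hfB (hgneg.le.trans_lt hgB)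

end AxSob

open AxSob AxSob.DStructure

/-- A pointwise local D-structure is strongly local in the sense of Shanmugalingam. -/
theorem pointwiseLocal_implies_shanmugalingam {X : Type*} [MetricSpace X] [CompleteSpace X]
    [TopologicalSpace.SeparableSpace X] [MeasurableSpace X] [BorelSpace X]
    (m : MeasureTheory.Measure X) (hm : m ≠ 0)
    (hball : ∀ (x : X) (r : ℝ), m (Metric.ball x r) < ∞)
    (p : ℝ) (hp : 1 < p) (S : DStructure X m p)
    (hloc : S.PointwiseLocal) : S.ShanmugalingamLocal := by
  obtain ⟨hL1, hL5⟩ := hloc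
  intro u₁ hu₁ u₂ hu₂ B hB hae g₁ hg₁ g₂ hg₂
  have hp0 : (0:ℝ) < p := by linarith
  obtain ⟨hu₁loc, hu₁E⟩ := hu₁
  obtain ⟨hu₂loc, hu₂E⟩ := hu₂
  set w : X → ℝ := fun x => u₁ x - u₂ x with hwdef
  have hwm : Measurable w := hu₁loc.1.sub hu₂loc.1
  have hwloc : LpLocMem m p w := by
    refine ⟨hwm, fun B' hB' hBb' => ?_⟩
    exact lpIntOn_sub_lt_top hp0 hu₁loc.1 hu₂loc.1 (hu₁loc.2 B' hB' hBb') (hu₂loc.2 B' hB' hBb')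
  -- a pseudo-gradient of w with finite p-integral
  have hexh : ∀ (v : X → ℝ), v ∈ S.SobolevClass →
      ∃ h, h ∈ S.D v ∧ lpIntOn m p h Set.univ < ∞ := by
    intro v hv
    have hlt : S.energy v < S.energy v + 1 := ENNReal.lt_add_right hv.2.ne one_ne_zero
    rw [DStructure.energy, DStructure.energyOn] at hlt
    obtain ⟨h, hh⟩ := iInf_lt_iff.1 hlt
    obtain ⟨hhD, hhlt⟩ := iInf_lt_iff.1 hh
    exact ⟨h, hhD, hhlt.trans (ENNReal.add_lt_top.2 ⟨hv.2, ENNReal.one_lt_top⟩)⟩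
  obtain ⟨h₁, hh₁D, hh₁fin⟩ := hexh u₁ ⟨hu₁loc, hu₁E⟩
  obtain ⟨h₂, hh₂D, hh₂fin⟩ := hexh u₂ ⟨hu₂loc, hu₂E⟩
  have hh₁m : Measurable h₁ := S.measurable_of_mem _ _ hh₁D
  have hh₂m : Measurable h₂ := S.measurable_of_mem _ _ hh₂D
  have hh₁0 : 0 ≤ h₁ := S.nonneg_of_mem _ _ hh₁D
  have hh₂0 : 0 ≤ h₂ := S.nonneg_of_mem _ _ hh₂D
  have hsumD : (fun x => h₁ x + h₂ x) ∈ S.D w := by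
    have h := S.axiomA2 u₁ u₂ h₁ h₂ (fun x => h₁ x + h₂ x) 1 (-1) hu₁loc hu₂loc hh₁D hh₂D
      (hh₁m.add hh₂m) (fun x => add_nonneg (hh₁0 x) (hh₂0 x))
      (Filter.Eventually.of_forall (fun x => le_of_eq (by simp)))
    rwa [S.congr_ae _ w (Filter.Eventually.of_forall (fun x => by
      simp only [hwdef]; ring))] at h
  have hw_sob : w ∈ S.SobolevClass := by
    refine ⟨hwloc, ?_⟩
    have hle : S.energy w ≤ lpIntOn m p (fun x => h₁ x + h₂ x) Set.univ := by
      simp only [DStructure.energy, DStructure.energyOn]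
      exact iInf₂_le _ hsumD
    exact lt_of_le_of_lt hle (lpIntOn_add_lt_top hp0 hh₁m hh₂m hh₁fin hh₂fin)
  -- minimal pseudo-gradients
  obtain ⟨Dw, hDwD, hDwLp, hDwmin⟩ := exists_minimalPG hp S hw_sob
  obtain ⟨G2, hG2D, hG2Lp, hG2min⟩ := exists_minimalPG hp S ⟨hu₂loc, hu₂E⟩
  have hDw0f : 0 ≤ Dw := S.nonneg_of_mem _ _ hDwD
  have hDwm : Measurable Dw := S.measurable_of_mem _ _ hDwD
  -- the energy of w on B vanishes
  have hwB0 : S.energyOn w B = 0 := by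
    refine hL1 w hw_sob B hB ⟨0, ?_⟩
    filter_upwards [hae] with x hx
    simp only [hwdef]
    exact sub_eq_zero.2 hx
  -- hence the minimal pseudo-gradient of w vanishes a.e. on B
  have hDwle : ∀ h ∈ S.D w, ∀ᵐ x ∂m, Dw x ≤ h x :=
    hL5 w hw_sob Dw ⟨hDwD, hDwLp, hDwmin⟩
  have hDw0 : ∀ᵐ x ∂(m.restrict B), Dw x = 0 := by
    have hle : lpIntOn m p Dw B ≤ S.energyOn w B := by
      simp only [DStructure.energyOn]
      refine le_iInf₂ (fun h hh => ?_)
      unfold lpIntOn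
      refine MeasureTheory.lintegral_mono_ae ?_
      filter_upwards [MeasureTheory.ae_restrict_of_ae (hDwle h hh)] with x hx
      refine ENNReal.rpow_le_rpow (ENNReal.ofReal_le_ofReal ?_) hp0.le
      rw [abs_of_nonneg (hDw0f x), abs_of_nonneg ((S.nonneg_of_mem _ _ hh) x)]
      exact hx
    rw [hwB0, le_zero_iff] at hle
    unfold lpIntOn at hle
    rw [MeasureTheory.lintegral_eq_zero_iff ((hDwm.abs.ennreal_ofReal).pow measurable_const)] at hle
    filter_upwards [hle] with x hx
    simp only [Pi.zero_apply] at hx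
    rcases ENNReal.rpow_eq_zero_iff.1 hx with ⟨h0, -⟩ | ⟨htop, -⟩
    · rw [ENNReal.ofReal_eq_zero] at h0
      exact abs_eq_zero.1 (le_antisymm h0 (abs_nonneg _))
    · exact absurd htop ENNReal.ofReal_ne_top
  -- `g₁ + Dw` is a pseudo-gradient of `u₂`
  have hsum2 : (fun x => g₁ x + Dw x) ∈ S.D u₂ := by
    have h := S.axiomA2 u₁ w g₁ Dw (fun x => g₁ x + Dw x) 1 (-1) hu₁loc hwloc hg₁ hDwD
      ((S.measurable_of_mem _ _ hg₁).add hDwm)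
      (fun x => add_nonneg ((S.nonneg_of_mem _ _ hg₁) x) (hDw0f x))
      (Filter.Eventually.of_forall (fun x => le_of_eq (by simp)))
    rwa [S.congr_ae _ u₂ (Filter.Eventually.of_forall (fun x => by
      simp only [hwdef]; ring))] at h
  -- L5 estimates for the minimal pseudo-gradient of u₂
  have hG2le1 : ∀ᵐ x ∂m, G2 x ≤ g₂ x :=
    hL5 u₂ ⟨hu₂loc, hu₂E⟩ G2 ⟨hG2D, hG2Lp, hG2min⟩ g₂ hg₂
  have hG2le2 : ∀ᵐ x ∂m, G2 x ≤ g₁ x + Dw x :=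
    hL5 u₂ ⟨hu₂loc, hu₂E⟩ G2 ⟨hG2D, hG2Lp, hG2min⟩ _ hsum2
  -- conclude via upward closure (axiom A2)
  have hGm : Measurable (fun x => B.indicator g₁ x + Bᶜ.indicator g₂ x) :=
    ((S.measurable_of_mem _ _ hg₁).indicator hB).add
      ((S.measurable_of_mem _ _ hg₂).indicator hB.compl)
  have hG0 : (0 : X → ℝ) ≤ fun x => B.indicator g₁ x + Bᶜ.indicator g₂ x := fun x =>
    add_nonneg (Set.indicator_nonneg (fun y _ => (S.nonneg_of_mem _ _ hg₁) y) x)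
      (Set.indicator_nonneg (fun y _ => (S.nonneg_of_mem _ _ hg₂) y) x)
  have hae2 : ∀ᵐ x ∂m, |(1:ℝ)| * G2 x + |(0:ℝ)| * G2 x
      ≤ B.indicator g₁ x + Bᶜ.indicator g₂ x := by
    have hDw0' : ∀ᵐ x ∂m, x ∈ B → Dw x = 0 := (MeasureTheory.ae_restrict_iff' hB).1 hDw0
    filter_upwards [hG2le1, hG2le2, hDw0'] with x h1 h2 h3
    simp only [abs_one, one_mul, abs_zero, zero_mul, add_zero]
    by_cases hx : x ∈ B
    · rw [Set.indicator_of_mem hx, Set.indicator_of_notMem (by simp [hx])]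
      have h4 := h3 hx
      rw [h4, add_zero] at h2
      linarith
    · rw [Set.indicator_of_notMem hx, Set.indicator_of_mem (Set.mem_compl hx), zero_add]
      exact h1
  have hfin := S.axiomA2 u₂ u₂ G2 G2 (fun x => B.indicator g₁ x + Bᶜ.indicator g₂ x) 1 0
    hu₂loc hu₂loc hG2D hG2D hGm hG0 hae2
  rwa [S.congr_ae _ u₂ (Filter.Eventually.of_forall (fun x => by ring))] at hfin
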